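/- Let X be a Banach space and A = K(X). If for every f ∈ A*, every weakly null sequence (x_n) and every bounded sequence (y_n) in K(X), f(x_n y_n) → 0, then X* has the Schur property. -/

import Mathlib

open Filter Topology ENNReal

/-- A sequence is weakly null if `f (x n) → 0` for every continuous linear functional `f`. -/
def WeaklyNull {A : Type*} [NormedAddCommGroup A] [NormedSpace ℝ A] (x : ℕ → A) : Prop :=
  ∀ f : A →L[ℝ] ℝ, Tendsto (fun n => f (x n)) atTop (𝓝 0)

/-- A sequence is weakly Cauchy if `f (x n)` converges for every continuous linear functional. -/
def WeaklyCauchy {A : Type*} [NormedAddCommGroup A] [NormedSpace ℝ A] (x : ℕ → A) : Prop :=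
  ∀ f : A →L[ℝ] ℝ, ∃ L : ℝ, Tendsto (fun n => f (x n)) atTop (𝓝 L)

/-- `E ⊆ A*` is an L-set: `sup_{f ∈ E} |f (x n)| → 0` for every weakly null `x`. -/
def LSet {A : Type*} [NormedAddCommGroup A] [NormedSpace ℝ A] (E : Set (A →L[ℝ] ℝ)) : Prop :=
  ∀ x : ℕ → A, WeaklyNull x → ∀ ε > (0 : ℝ), ∃ N : ℕ, ∀ n ≥ N, ∀ f ∈ E, |f (x n)| < ε

/-- A set is weakly precompact if every sequence in it has a weakly Cauchy subsequence. -/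
def WeaklyPrecompact {A : Type*} [NormedAddCommGroup A] [NormedSpace ℝ A] (K : Set A) : Prop :=
  ∀ x : ℕ → A, (∀ n, x n ∈ K) → ∃ φ : ℕ → ℕ, StrictMono φ ∧ WeaklyCauchy (x ∘ φ)

/-- A map is completely continuous if it sends weakly null sequences to norm null sequences. -/
def CompletelyContinuous {A B : Type*} [NormedAddCommGroup A] [NormedSpace ℝ A]
    [NormedAddCommGroup B] (T : A → B) : Prop :=
  ∀ x : ℕ → A, WeaklyNull x → Tendsto (fun n => ‖T (x n)‖) atTop (𝓝 0)

/-- The multiplication operator `T_f : A → A*`, `(T_f a) x = f (a * x)`. -/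
noncomputable def Tf {A : Type*} [NormedRing A] [NormedAlgebra ℝ A]
    (f : A →L[ℝ] ℝ) (a : A) : A →L[ℝ] ℝ :=
  f.comp (ContinuousLinearMap.mul ℝ A a)

/-- The multiplication operator `S_f : A → A*`, `(S_f a) x = f (x * a)`. -/
noncomputable def Sf {A : Type*} [NormedRing A] [NormedAlgebra ℝ A]
    (f : A →L[ℝ] ℝ) (a : A) : A →L[ℝ] ℝ :=
  f.comp ((ContinuousLinearMap.mul ℝ A).flip a)

/-- `w` is an ℓ¹-sequence: equivalent to the unit vector basis of ℓ¹. -/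
def IsL1Sequence {A : Type*} [NormedAddCommGroup A] [NormedSpace ℝ A] (w : ℕ → A) : Prop :=
  ∃ c C : ℝ, 0 < c ∧ ∀ (s : Finset ℕ) (lam : ℕ → ℝ),
    c * ∑ n ∈ s, |lam n| ≤ ‖∑ n ∈ s, lam n • w n‖ ∧
      ‖∑ n ∈ s, lam n • w n‖ ≤ C * ∑ n ∈ s, |lam n|

/-- The Schur property: weakly convergent sequences are norm convergent. -/
def SchurProperty (A : Type*) [NormedAddCommGroup A] [NormedSpace ℝ A] : Prop :=
  ∀ (x : ℕ → A) (L : A),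
    (∀ f : A →L[ℝ] ℝ, Tendsto (fun n => f (x n)) atTop (𝓝 (f L))) →
      Tendsto x atTop (𝓝 L)


variable (X : Type*) [NormedAddCommGroup X] [NormedSpace ℝ X]

/-- The space `K(X)` of compact operators on `X`, as a submodule of `X →L[ℝ] X`. -/
noncomputable abbrev KX : Submodule ℝ (X →L[ℝ] X) :=
  compactOperator (RingHom.id ℝ) X X

/-- Multiplication (composition) in `K(X)`. -/
noncomputable def Kmul {X : Type*} [NormedAddCommGroup X] [NormedSpace ℝ X]
    (a b : KX X) : KX X :=
  ⟨(a : X →L[ℝ] X).comp (b : X →L[ℝ] X), by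
    exact a.2.comp_clm (b : X →L[ℝ] X)⟩

/-- Right multiplication by `a` in `K(X)` as a continuous linear map. -/
noncomputable def KmulRight {X : Type*} [NormedAddCommGroup X] [NormedSpace ℝ X]
    (a : KX X) : KX X →L[ℝ] KX X :=
  LinearMap.mkContinuous
    { toFun := fun b => Kmul b a
      map_add' := by
        intro b c
        apply Subtype.ext
        simp [Kmul, ContinuousLinearMap.add_comp]
      map_smul' := by
        intro r b
        apply Subtype.ext
        simp [Kmul, ContinuousLinearMap.smul_comp] }
    ‖(a : X →L[ℝ] X)‖
    (by
      intro b
      calc ‖Kmul b a‖ = ‖(b : X →L[ℝ] X).comp (a : X →L[ℝ] X)‖ := rfl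
        _ ≤ ‖(b : X →L[ℝ] X)‖ * ‖(a : X →L[ℝ] X)‖ := ContinuousLinearMap.opNorm_comp_le _ _
        _ = ‖(a : X →L[ℝ] X)‖ * ‖b‖ := by rw [mul_comm]; rfl)

/-- Left multiplication by `a` in `K(X)` as a continuous linear map. -/
noncomputable def KmulLeft {X : Type*} [NormedAddCommGroup X] [NormedSpace ℝ X]
    (a : KX X) : KX X →L[ℝ] KX X :=
  LinearMap.mkContinuous
    { toFun := fun b => Kmul a b
      map_add' := by
        intro b c
        apply Subtype.ext
        simp [Kmul, ContinuousLinearMap.comp_add]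
      map_smul' := by
        intro r b
        apply Subtype.ext
        simp [Kmul, ContinuousLinearMap.comp_smul] }
    ‖(a : X →L[ℝ] X)‖
    (by
      intro b
      calc ‖Kmul a b‖ = ‖(a : X →L[ℝ] X).comp (b : X →L[ℝ] X)‖ := rfl
        _ ≤ ‖(a : X →L[ℝ] X)‖ * ‖(b : X →L[ℝ] X)‖ := ContinuousLinearMap.opNorm_comp_le _ _
        _ = ‖(a : X →L[ℝ] X)‖ * ‖b‖ := rfl)

/-- The operator `T_f : K(X) → K(X)*`, `(T_f a)(x) = f (a x)` (product = composition). -/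
noncomputable def TfK {X : Type*} [NormedAddCommGroup X] [NormedSpace ℝ X]
    (f : KX X →L[ℝ] ℝ) (a : KX X) : KX X →L[ℝ] ℝ :=
  f.comp (KmulLeft a)

/-- The operator `S_f : K(X) → K(X)*`, `(S_f a)(x) = f (x a)`. -/
noncomputable def SfK {X : Type*} [NormedAddCommGroup X] [NormedSpace ℝ X]
    (f : KX X →L[ℝ] ℝ) (a : KX X) : KX X →L[ℝ] ℝ :=
  f.comp (KmulRight a)


section Aux

variable {X : Type*} [NormedAddCommGroup X] [NormedSpace ℝ X]

lemma rankOne_isCompact (g : X →L[ℝ] ℝ) (v : X) :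
    IsCompactOperator (g.smulRight v) := by
  refine ⟨(fun t : ℝ => t • v) '' Set.Icc (-‖g‖) ‖g‖,
    isCompact_Icc.image (continuous_id.smul continuous_const), ?_⟩
  filter_upwards [Metric.closedBall_mem_nhds (0 : X) one_pos] with y hy
  refine ⟨g y, ?_, rfl⟩
  rw [Metric.mem_closedBall, dist_zero_right] at hy
  have h1 : |g y| ≤ ‖g‖ * ‖y‖ := by simpa [Real.norm_eq_abs] using g.le_opNorm y
  have h2 : (0:ℝ) ≤ ‖g‖ := norm_nonneg _
  constructor <;> [skip; skip] <;> nlinarith [neg_abs_le (g y), le_abs_self (g y)]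

/-- Rank-one operator `y ↦ g y • v` as an element of `K(X)`. -/
noncomputable def rankOne (g : X →L[ℝ] ℝ) (v : X) : KX X :=
  ⟨g.smulRight v, rankOne_isCompact g v⟩

lemma norm_rankOne (g : X →L[ℝ] ℝ) (v : X) : ‖rankOne g v‖ = ‖g‖ * ‖v‖ := by
  show ‖g.smulRight v‖ = ‖g‖ * ‖v‖
  exact g.norm_smulRight_apply v

/-- `rankOne · v` as a continuous linear map into `K(X)`. -/
noncomputable def rankOneL (v : X) : (X →L[ℝ] ℝ) →L[ℝ] KX X :=
  LinearMap.mkContinuous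
    { toFun := fun g => rankOne g v
      map_add' := by
        intro a b
        apply Subtype.ext
        ext y
        simp [rankOne, ContinuousLinearMap.smulRight_apply, add_smul]
      map_smul' := by
        intro r a
        apply Subtype.ext
        ext y
        simp [rankOne, ContinuousLinearMap.smulRight_apply, smul_smul] }
    ‖v‖
    (fun g => by rw [mul_comm]; exact le_of_eq (norm_rankOne g v))

lemma Kmul_rankOne (g ψ : X →L[ℝ] ℝ) (v w : X) :
    Kmul (rankOne g v) (rankOne ψ w) = (g w) • rankOne ψ v := by
  apply Subtype.ext
  ext y
  simp [Kmul, rankOne, ContinuousLinearMap.smulRight_apply, smul_smul, mul_comm]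

end Aux

theorem dual_schur_of_tfK_cc [CompleteSpace X]
    (h : ∀ f : KX X →L[ℝ] ℝ, ∀ x y : ℕ → KX X, WeaklyNull x →
      (∃ C : ℝ, ∀ n, ‖y n‖ ≤ C) →
      Tendsto (fun n => f (Kmul (x n) (y n))) atTop (𝓝 0)) :
    SchurProperty (X →L[ℝ] ℝ) := by
  intro g L hg
  by_cases hX : ∃ v : X, v ≠ 0
  · obtain ⟨v, hv⟩ := hX
    obtain ⟨ψ0, hψ0norm, hψ0⟩ := exists_dual_vector ℝ v (norm_ne_zero_iff.mpr hv)
    set ψ : X →L[ℝ] ℝ := ‖v‖⁻¹ • ψ0 with hψdef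
    have hvne : ‖v‖ ≠ 0 := norm_ne_zero_iff.mpr hv
    have hψv : ψ v = 1 := by
      simp only [hψdef, ContinuousLinearMap.smul_apply, hψ0, smul_eq_mul,
        RCLike.ofReal_real_eq_id, id_eq]
      field_simp
    set d : ℕ → (X →L[ℝ] ℝ) := fun n => g n - L with hddef
    have hd : ∀ F : (X →L[ℝ] ℝ) →L[ℝ] ℝ, Tendsto (fun n => F (d n)) atTop (𝓝 0) := by
      intro F
      have h1 := (hg F).sub (tendsto_const_nhds (x := F L))
      simp only [sub_self] at h1
      refine h1.congr fun n => ?_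
      simp [hddef]
    rw [tendsto_iff_norm_sub_tendsto_zero]
    by_contra hcon
    rw [Metric.tendsto_atTop] at hcon
    push_neg at hcon
    obtain ⟨ε, hε, hfreq⟩ := hcon
    have hfreq' : ∀ N, ∃ n > N, ε ≤ ‖d n‖ := by
      intro N
      obtain ⟨n, hn, hdn⟩ := hfreq (N + 1)
      refine ⟨n, by omega, ?_⟩
      rwa [Real.dist_eq, sub_zero, abs_of_nonneg (norm_nonneg _)] at hdn
    obtain ⟨φ, hφmono, hφP⟩ := Filter.extraction_of_frequently_atTop
      (P := fun n => ε ≤ ‖d n‖) (Filter.frequently_atTop'.mpr hfreq')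
    have hx : ∀ k, ∃ x : X, ‖x‖ < 1 ∧ ε / 2 < ‖(d (φ k)) x‖ := by
      intro k
      exact (d (φ k)).exists_lt_apply_of_lt_opNorm (by linarith [hφP k])
    choose x hx1 hx2 using hx
    set A : ℕ → KX X := fun k => rankOne (d (φ k)) v with hAdef
    set B : ℕ → KX X := fun k => rankOne ψ (x k) with hBdef
    set E : KX X := rankOne ψ v with hEdef
    have hEne : E ≠ 0 := by
      intro hE0
      have : (E : X →L[ℝ] X) v = 0 := by rw [hE0]; rfl
      rw [hEdef] at this
      simp only [rankOne, ContinuousLinearMap.smulRight_apply, hψv, one_smul] at this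
      exact hv this
    have hEpos : (0:ℝ) < ‖E‖ := norm_pos_iff.mpr hEne
    obtain ⟨f, hfnorm, hfE⟩ := exists_dual_vector ℝ E (norm_ne_zero_iff.mpr hEne)
    have hA : WeaklyNull A := by
      intro F
      have key := (hd (F.comp (rankOneL v))).comp hφmono.tendsto_atTop
      refine key.congr fun k => ?_
      rfl
    have hB : ∃ C : ℝ, ∀ n, ‖B n‖ ≤ C := by
      refine ⟨‖ψ‖, fun n => ?_⟩
      rw [hBdef]
      calc ‖rankOne ψ (x n)‖ = ‖ψ‖ * ‖x n‖ := norm_rankOne ψ (x n)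
        _ ≤ ‖ψ‖ * 1 := by
            exact mul_le_mul_of_nonneg_left (hx1 n).le (norm_nonneg _)
        _ = ‖ψ‖ := mul_one _
    have htend := h f A B hA hB
    rw [Metric.tendsto_atTop] at htend
    obtain ⟨N, hN⟩ := htend (ε / 2 * ‖E‖) (by positivity)
    have hNval := hN N le_rfl
    rw [Real.dist_eq, sub_zero] at hNval
    have hKAB : Kmul (A N) (B N) = ((d (φ N)) (x N)) • E := by
      rw [hAdef, hBdef, hEdef]
      exact Kmul_rankOne _ _ _ _
    rw [hKAB, map_smul, smul_eq_mul, hfE] at hNval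
    simp only [RCLike.ofReal_real_eq_id, id_eq] at hNval
    rw [abs_mul, abs_of_nonneg (norm_nonneg _)] at hNval
    have h2 : ε / 2 < |(d (φ N)) (x N)| := by
      simpa [Real.norm_eq_abs] using hx2 N
    have h3 := mul_lt_mul_of_pos_right h2 hEpos
    exact lt_asymm hNval h3
  · push_neg at hX
    have hall : ∀ n, g n = L := by
      intro n
      ext y
      rw [hX y]
      simp
    exact tendsto_const_nhds.congr fun n => (hall n).symm
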